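/- Let $n,k,t$ be positive integers with $k\ge2$ and $n\ge t+2$, and set $r=t+2$, so $p:=\min\{r+1,n\}$. If $n\ge t+3$ (so $p=t+3$), then $|\mathcal{H}_1(n,t+2,k,t+3,t)|=3(n-t-1)k+t-3$. -/

import Mathlib

open Finset

attribute [local instance] Classical.propDecidable

/-- The ground set `[n] × [k]`. -/
def box (n k : ℕ) : Finset (ℕ × ℕ) := Finset.Icc 1 n ×ˢ Finset.Icc 1 k

/-- A `k`-signed set on `[n]`: a subset of `[n] × [k]` with pairwise distinct first coordinates. -/
def IsSigned (n k : ℕ) (T : Finset (ℕ × ℕ)) : Prop :=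
  T ⊆ box n k ∧ (T.image Prod.fst).card = T.card

/-- `L n r k`: the collection of `k`-signed `r`-sets on `[n]`. -/
def L (n r k : ℕ) : Finset (Finset (ℕ × ℕ)) :=
  (box n k).powerset.filter (fun F => F.card = r ∧ (F.image Prod.fst).card = r)

/-- A family is `t`-intersecting if any two members meet in at least `t` elements. -/
def IsTIntersecting (t : ℕ) (F : Finset (Finset (ℕ × ℕ))) : Prop :=
  ∀ A ∈ F, ∀ B ∈ F, t ≤ (A ∩ B).card

/-- `T` is a `t`-cover of the family `F`: a `k`-signed set meeting every member in ≥ `t` points. -/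
def IsTCover (n k t : ℕ) (F : Finset (Finset (ℕ × ℕ))) (T : Finset (ℕ × ℕ)) : Prop :=
  IsSigned n k T ∧ ∀ A ∈ F, t ≤ (T ∩ A).card

/-- `F` is a maximal `t`-intersecting subfamily of `L n r k`. -/
def IsMaximalTIntersecting (n r k t : ℕ) (F : Finset (Finset (ℕ × ℕ))) : Prop :=
  F ⊆ L n r k ∧ IsTIntersecting t F ∧
    ∀ G ⊆ L n r k, IsTIntersecting t G → F ⊆ G → G = F

/-- A `t`-intersecting family is trivial if all members contain a fixed `k`-signed `t`-set. -/
def IsTrivial (n k t : ℕ) (F : Finset (Finset (ℕ × ℕ))) : Prop :=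
  ∃ T, IsSigned n k T ∧ T.card = t ∧ ∀ A ∈ F, T ⊆ A

/-- `Msig d = {(1,1),(2,1),…,(d,1)}`. -/
def Msig (d : ℕ) : Finset (ℕ × ℕ) := (Finset.Icc 1 d).image (fun x => (x, 1))

/-- The family `H₁(n,r,k,ℓ,t)`. -/
def H1 (n r k l t : ℕ) : Finset (Finset (ℕ × ℕ)) :=
  (L n r k).filter (fun F =>
    (Msig t ⊆ F ∧ t + 1 ≤ (F ∩ Msig l).card) ∨
    (¬ Msig t ⊆ F ∧ (F ∩ Msig l).card = l - 1))

/-- The family `H₂(n,r,k,c,t)`. -/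
def H2 (n r k c t : ℕ) : Finset (Finset (ℕ × ℕ)) :=
  (L n r k).filter (fun F =>
    (Msig t ⊆ F ∧ t + 1 ≤ (F ∩ Msig r).card) ∨
    (F ∩ Msig r = Msig t ∧ Msig c \ Msig r ⊆ F) ∨
    (¬ Msig t ⊆ F ∧ (F ∩ Msig r).card = r - 1 ∧ (F ∩ (Msig c \ Msig r)).card = 1))

/-- The set of all `t`-covers of `F` of size `t+1`. -/
noncomputable def TauSet (n k t : ℕ) (F : Finset (Finset (ℕ × ℕ))) : Finset (Finset (ℕ × ℕ)) :=
  (box n k).powerset.filter (fun T => IsTCover n k t F T ∧ T.card = t + 1)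
section Helpers

open Finset

variable {n k t d a : ℕ}

lemma mem_Msig {p : ℕ × ℕ} : p ∈ Msig d ↔ 1 ≤ p.1 ∧ p.1 ≤ d ∧ p.2 = 1 := by
  simp only [Msig, mem_image, mem_Icc]
  constructor
  · rintro ⟨x, ⟨h1, h2⟩, rfl⟩; exact ⟨h1, h2, rfl⟩
  · rintro ⟨h1, h2, h3⟩
    exact ⟨p.1, ⟨h1, h2⟩, by rw [← h3]⟩

lemma card_Msig (d : ℕ) : (Msig d).card = d := by
  rw [Msig, Finset.card_image_of_injective _ (fun a b h => by simpa using h), Nat.card_Icc]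
  omega

lemma box_def : box n k = Finset.Icc 1 n ×ˢ Finset.Icc 1 k := rfl

lemma Msig_subset_box (hd : d ≤ n) (hk : 1 ≤ k) : Msig d ⊆ box n k := by
  intro p hp
  rw [mem_Msig] at hp
  simp only [box_def, mem_product, mem_Icc]
  omega

lemma image_fst_Msig (d : ℕ) : (Msig d).image Prod.fst = Finset.Icc 1 d := by
  ext x
  simp [Msig, Finset.image_image]

lemma mem_box {p : ℕ × ℕ} : p ∈ box n k ↔ 1 ≤ p.1 ∧ p.1 ≤ n ∧ 1 ≤ p.2 ∧ p.2 ≤ k := by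
  simp only [box_def, mem_product, mem_Icc]; tauto

lemma mem_L {F : Finset (ℕ × ℕ)} {r : ℕ} :
    F ∈ L n r k ↔ F ⊆ box n k ∧ F.card = r ∧ (F.image Prod.fst).card = r := by
  simp [L, mem_filter, mem_powerset, and_assoc]

end Helpers
section Part2

open Finset

variable {n k t a i : ℕ}

/-- The sets `Msig (t+3)` minus one point. -/
def gAux (t i : ℕ) : Finset (ℕ × ℕ) := (Msig (t+3)).erase (i, 1)

/-- `Msig t` together with `(a,1)` and an extra point `p`. -/
def fAux (t a : ℕ) (p : ℕ × ℕ) : Finset (ℕ × ℕ) := insert (a, 1) (insert p (Msig t))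

/-- Parameter set for the extra point. -/
def fiber (n k t a : ℕ) : Finset (ℕ × ℕ) :=
  (Finset.Icc (t+4) n ×ˢ Finset.Icc 1 k) ∪ (((Finset.Icc (t+1) (t+3)).erase a) ×ˢ Finset.Icc 2 k)

lemma mem_fiber (hn : t + 3 ≤ n) (ha1 : t + 1 ≤ a) (ha2 : a ≤ t + 3) {p : ℕ × ℕ} :
    p ∈ fiber n k t a ↔
      p ∈ box n k ∧ t < p.1 ∧ p.1 ≠ a ∧ ¬(p.1 ≤ t + 3 ∧ p.2 = 1) := by
  simp only [fiber, mem_union, mem_product, mem_Icc, mem_erase, mem_box]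
  constructor
  · rintro (⟨⟨h1, h2⟩, h3, h4⟩ | ⟨⟨hne, h1, h2⟩, h3, h4⟩) <;>
      exact ⟨⟨by omega, by omega, by omega, by omega⟩, by omega, by omega, by omega⟩
  · rintro ⟨⟨h1, h2, h3, h4⟩, h5, h6, h7⟩
    by_cases hc : p.1 ≤ t + 3
    · right
      have hy : p.2 ≠ 1 := fun h => h7 ⟨hc, h⟩
      exact ⟨⟨h6, by omega, hc⟩, by omega, h4⟩
    · left
      exact ⟨⟨by omega, h2⟩, h3, h4⟩

lemma card_fiber (ha1 : t + 1 ≤ a) (ha2 : a ≤ t + 3) :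
    (fiber n k t a).card = (n - (t+3)) * k + 2 * (k - 1) := by
  rw [fiber, Finset.card_union_of_disjoint, Finset.card_product, Finset.card_product,
    Nat.card_Icc, Nat.card_Icc, Nat.card_Icc, Finset.card_erase_of_mem (by simp [mem_Icc]; omega),
    Nat.card_Icc]
  · have e1 : n + 1 - (t + 4) = n - (t + 3) := by omega
    have e2 : k + 1 - 1 = k := by omega
    have e3 : t + 3 + 1 - (t + 1) - 1 = 2 := by omega
    have e4 : k + 1 - 2 = k - 1 := by omega
    rw [e1, e2, e3, e4]
  · rw [Finset.disjoint_left]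
    rintro ⟨x, y⟩ hx hy
    simp only [mem_product, mem_Icc, mem_erase] at hx hy
    omega

end Part2
section Part3

open Finset

variable {n k t a i : ℕ}

lemma Msig_mono {d e : ℕ} (h : d ≤ e) : Msig d ⊆ Msig e := by
  intro q hq; rw [mem_Msig] at hq ⊢; omega

lemma injOn_fst_of_subset_Msig {F : Finset (ℕ × ℕ)} {d : ℕ} (h : F ⊆ Msig d) :
    Set.InjOn Prod.fst (F : Set (ℕ × ℕ)) := by
  intro q1 h1 q2 h2 he
  have m1 := mem_Msig.1 (h h1)
  have m2 := mem_Msig.1 (h h2)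
  exact Prod.ext he (m1.2.2.trans m2.2.2.symm)

lemma gAux_mem_H1 (hk : 1 ≤ k) (hn : t + 3 ≤ n) (hi1 : 1 ≤ i) (hi2 : i ≤ t + 3) :
    gAux t i ∈ H1 n (t+2) k (t+3) t := by
  have hmem : (i, 1) ∈ Msig (t+3) := mem_Msig.2 ⟨hi1, hi2, rfl⟩
  have hsub : gAux t i ⊆ Msig (t+3) := erase_subset _ _
  have hcard : (gAux t i).card = t + 2 := by
    rw [gAux, card_erase_of_mem hmem, card_Msig]; omega

  have hicard : ((gAux t i).image Prod.fst).card = t + 2 := by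
    rw [Finset.card_image_of_injOn (injOn_fst_of_subset_Msig hsub), hcard]
  have hinter : gAux t i ∩ Msig (t+3) = gAux t i := inter_eq_left.2 hsub
  rw [H1, mem_filter, mem_L]
  refine ⟨⟨hsub.trans (Msig_subset_box hn hk), hcard, hicard⟩, ?_⟩
  by_cases hit : i ≤ t
  · right
    constructor
    · intro hcon
      have : (i, 1) ∈ gAux t i := hcon (mem_Msig.2 ⟨hi1, hit, rfl⟩)
      exact (notMem_erase _ _) this
    · rw [hinter, hcard]; omega
  · left
    constructor
    · intro q hq
      have hq' := mem_Msig.1 hq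
      refine mem_erase.2 ⟨?_, Msig_mono (by omega) hq⟩
      intro hcon
      rw [hcon] at hq'
      omega
    · rw [hinter, hcard]; omega

lemma fAux_facts (hn : t + 3 ≤ n) (ha1 : t + 1 ≤ a) (ha2 : a ≤ t + 3) {p : ℕ × ℕ}
    (hp : p ∈ fiber n k t a) :
    p ∉ Msig (t+3) ∧ p ∉ Msig t ∧ p ≠ (a, 1) ∧ (a, 1) ∈ Msig (t+3) ∧ (a, 1) ∉ Msig t := by
  rw [mem_fiber hn ha1 ha2] at hp
  obtain ⟨hpb, hpt, hpa, hpm⟩ := hp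
  refine ⟨?_, ?_, ?_, mem_Msig.2 ⟨by omega, ha2, rfl⟩, ?_⟩
  · rw [mem_Msig]; intro h; exact hpm ⟨h.2.1, h.2.2⟩
  · rw [mem_Msig]; omega
  · intro h; exact hpa (by rw [h])
  · rw [mem_Msig]; simp; omega

lemma fAux_mem_H1 (hk : 1 ≤ k) (hn : t + 3 ≤ n) (ha1 : t + 1 ≤ a) (ha2 : a ≤ t + 3)
    {p : ℕ × ℕ} (hp : p ∈ fiber n k t a) :
    fAux t a p ∈ H1 n (t+2) k (t+3) t := by
  obtain ⟨hpM, hpMt, hpe, haM, haMt⟩ := fAux_facts hn ha1 ha2 hp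
  rw [mem_fiber hn ha1 ha2] at hp
  obtain ⟨hpb, hpt, hpa, hpm⟩ := hp
  have hanotins : (a, 1) ∉ insert p (Msig t) := by
    simp only [mem_insert]
    rintro (h | h)
    · exact hpe h.symm
    · exact haMt h
  have hcard : (fAux t a p).card = t + 2 := by
    rw [fAux, card_insert_of_notMem hanotins, card_insert_of_notMem hpMt, card_Msig]
  have hicard : ((fAux t a p).image Prod.fst).card = t + 2 := by
    rw [fAux, image_insert, image_insert, image_fst_Msig]
    rw [card_insert_of_notMem, card_insert_of_notMem, Nat.card_Icc]
    · omega
    · rw [mem_Icc]; omega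
    · simp only [mem_insert, mem_Icc]
      rintro (h | h)
      · exact hpa h.symm
      · omega
  have hbox : fAux t a p ⊆ box n k := by
    rw [fAux]
    refine insert_subset (mem_box.2 ⟨by omega, by omega, le_refl 1, hk⟩)
      (insert_subset (mem_box.1 hpb |> mem_box.2) (Msig_subset_box (by omega) hk))
  have hinter : fAux t a p ∩ Msig (t+3) = insert (a, 1) (Msig t) := by
    rw [fAux, insert_inter_of_mem haM, insert_inter_of_notMem hpM,
      inter_eq_left.2 (Msig_mono (by omega))]
  rw [H1, mem_filter, mem_L]
  refine ⟨⟨hbox, hcard, hicard⟩, Or.inl ⟨?_, ?_⟩⟩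
  · exact (subset_insert _ _).trans (subset_insert _ _)
  · rw [hinter, card_insert_of_notMem haMt, card_Msig]

end Part3
section Part4

open Finset

variable {n k t : ℕ}

lemma H1_mem_structure (hn : t + 3 ≤ n) {F : Finset (ℕ × ℕ)}
    (hF : F ∈ H1 n (t+2) k (t+3) t) :
    (∃ i ∈ Finset.Icc 1 (t+3), F = gAux t i) ∨
    (∃ a ∈ Finset.Icc (t+1) (t+3), ∃ p ∈ fiber n k t a, F = fAux t a p) := by
  rw [H1, mem_filter, mem_L] at hF
  obtain ⟨⟨hbox, hcard, himg⟩, hpred⟩ := hF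
  have hinj : Set.InjOn Prod.fst (F : Set (ℕ × ℕ)) :=
    Finset.card_image_iff.1 (by rw [himg, hcard])
  have key : (F ∩ Msig (t+3)).card = t + 2 → ∃ i ∈ Finset.Icc 1 (t+3), F = gAux t i := by
    intro hc
    have hFM : F ⊆ Msig (t+3) := by
      have heq : F ∩ Msig (t+3) = F :=
        eq_of_subset_of_card_le inter_subset_left (by rw [hc, hcard])
      exact inter_eq_left.1 heq
    have hsd : (Msig (t+3) \ F).card = 1 := by
      rw [card_sdiff_of_subset hFM, card_Msig, hcard]
      omega
    obtain ⟨q, hq⟩ := card_eq_one.1 hsd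
    have hq' : q ∈ Msig (t+3) \ F := hq ▸ mem_singleton_self q
    have hqM : q ∈ Msig (t+3) := (mem_sdiff.1 hq').1
    have hqF : q ∉ F := (mem_sdiff.1 hq').2
    have hq1 := mem_Msig.1 hqM
    refine ⟨q.1, mem_Icc.2 ⟨hq1.1, hq1.2.1⟩, ?_⟩
    have hqeq : (q.1, 1) = q := Prod.ext rfl hq1.2.2.symm
    rw [gAux, hqeq]
    refine eq_of_subset_of_card_le
      (fun x hx => mem_erase.2 ⟨fun hxq => hqF (hxq ▸ hx), hFM hx⟩) ?_
    rw [card_erase_of_mem hqM, card_Msig, hcard]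
    omega
  rcases hpred with ⟨hMt, hle⟩ | ⟨hnMt, hceq⟩
  · have hcle : (F ∩ Msig (t+3)).card ≤ t + 2 := hcard ▸ card_le_card inter_subset_left
    by_cases hc2 : (F ∩ Msig (t+3)).card = t + 2
    · exact Or.inl (key hc2)
    · have hc : (F ∩ Msig (t+3)).card = t + 1 := by omega
      have hMtE : Msig t ⊆ F ∩ Msig (t+3) := subset_inter hMt (Msig_mono (by omega))
      have h1 : ((F ∩ Msig (t+3)) \ Msig t).card = 1 := by
        rw [card_sdiff_of_subset hMtE, hc, card_Msig]
        omega
      obtain ⟨e, he⟩ := card_eq_one.1 h1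
      have he' : e ∈ (F ∩ Msig (t+3)) \ Msig t := he ▸ mem_singleton_self e
      have heE : e ∈ F ∩ Msig (t+3) := (mem_sdiff.1 he').1
      have heMt : e ∉ Msig t := (mem_sdiff.1 he').2
      have heM : e ∈ Msig (t+3) := (mem_inter.1 heE).2
      have heF : e ∈ F := (mem_inter.1 heE).1
      have he1 := mem_Msig.1 heM
      have hea : t + 1 ≤ e.1 := by
        by_contra hcon
        exact heMt (mem_Msig.2 ⟨he1.1, by omega, he1.2.2⟩)
      have hFd : (F \ Msig (t+3)).card = 1 := by
        have := Finset.card_inter_add_card_sdiff F (Msig (t+3))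
        omega
      obtain ⟨p, hp⟩ := card_eq_one.1 hFd
      have hp' : p ∈ F \ Msig (t+3) := hp ▸ mem_singleton_self p
      have hpF : p ∈ F := (mem_sdiff.1 hp').1
      have hpM : p ∉ Msig (t+3) := (mem_sdiff.1 hp').2
      have hpMt : p ∉ Msig t := fun h => hpM (Msig_mono (by omega) h)
      have hpe : p ≠ e := fun h => hpM (h ▸ heM)
      have hpbox := mem_box.1 (hbox hpF)
      have hpt : t < p.1 := by
        by_contra hcon
        have hm : (p.1, 1) ∈ Msig t := mem_Msig.2 ⟨hpbox.1, by omega, rfl⟩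
        have : p = (p.1, 1) := hinj hpF (hMt hm) rfl
        exact hpMt (this ▸ hm)
      have hpa : p.1 ≠ e.1 := fun h => hpe (hinj hpF heF h)
      have hpfib : p ∈ fiber n k t e.1 := by
        rw [mem_fiber hn hea he1.2.1]
        refine ⟨hbox hpF, hpt, hpa, fun h => hpM (mem_Msig.2 ⟨by omega, h.1, h.2⟩)⟩
      refine Or.inr ⟨e.1, mem_Icc.2 ⟨hea, he1.2.1⟩, p, hpfib, ?_⟩
      have heeq : (e.1, 1) = e := Prod.ext rfl he1.2.2.symm
      rw [fAux, heeq]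
      refine eq_of_subset_of_card_le ?_ ?_
      · intro x hx
        by_cases hxe : x = e
        · exact mem_insert.2 (Or.inl hxe)
        · by_cases hxp : x = p
          · exact mem_insert.2 (Or.inr (mem_insert.2 (Or.inl hxp)))
          · refine mem_insert.2 (Or.inr (mem_insert.2 (Or.inr ?_)))
            by_cases hxM : x ∈ Msig (t+3)
            · have hxE : x ∈ F ∩ Msig (t+3) := mem_inter.2 ⟨hx, hxM⟩
              have : x ∉ (F ∩ Msig (t+3)) \ Msig t := by
                rw [he]
                simp [hxe]
              by_contra hcon
              exact this (mem_sdiff.2 ⟨hxE, hcon⟩)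
            · have : x ∈ F \ Msig (t+3) := mem_sdiff.2 ⟨hx, hxM⟩
              rw [hp] at this
              exact absurd (mem_singleton.1 this) hxp
      · have hpni : p ∉ Msig t := hpMt
        have heni : e ∉ insert p (Msig t) := by
          simp only [mem_insert]
          rintro (h | h)
          · exact hpe h.symm
          · exact heMt h
        rw [card_insert_of_notMem heni, card_insert_of_notMem hpni, card_Msig, hcard]
  · exact Or.inl (key (by omega : (F ∩ Msig (t+3)).card = t + 2) )

end Part4
section Part5

open Finset

variable {n k t : ℕ}

lemma H1_eq (hk : 1 ≤ k) (hn : t + 3 ≤ n) :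
    H1 n (t+2) k (t+3) t =
      ((Finset.Icc 1 (t+3)).image (gAux t)) ∪
      ((Finset.Icc (t+1) (t+3)).biUnion fun a => (fiber n k t a).image (fAux t a)) := by
  ext F
  simp only [mem_union, mem_image, mem_biUnion]
  constructor
  · intro hF
    rcases H1_mem_structure hn hF with ⟨i, hi, rfl⟩ | ⟨a, ha, p, hp, rfl⟩
    · exact Or.inl ⟨i, hi, rfl⟩
    · exact Or.inr ⟨a, ha, p, hp, rfl⟩
  · rintro (⟨i, hi, rfl⟩ | ⟨a, ha, p, hp, rfl⟩)
    · exact gAux_mem_H1 hk hn (mem_Icc.1 hi).1 (mem_Icc.1 hi).2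
    · exact fAux_mem_H1 hk hn (mem_Icc.1 ha).1 (mem_Icc.1 ha).2 hp

lemma mem_fAux_self (t a : ℕ) (p : ℕ × ℕ) : p ∈ fAux t a p :=
  mem_insert.2 (Or.inr (mem_insert.2 (Or.inl rfl)))

lemma card_H1 (hk : 1 ≤ k) (hn : t + 3 ≤ n) :
    (H1 n (t+2) k (t+3) t).card = (t + 3) + 3 * ((n - (t+3)) * k + 2 * (k - 1)) := by
  rw [H1_eq hk hn]
  have hdisj : Disjoint ((Finset.Icc 1 (t+3)).image (gAux t))
      ((Finset.Icc (t+1) (t+3)).biUnion fun a => (fiber n k t a).image (fAux t a)) := by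
    rw [Finset.disjoint_left]
    intro F hG hA
    simp only [mem_image, mem_biUnion] at hG hA
    obtain ⟨i, hi, rfl⟩ := hG
    obtain ⟨a, ha, p, hp, hEq⟩ := hA
    rw [mem_Icc] at ha
    have hfacts := fAux_facts hn ha.1 ha.2 hp
    have hpin : p ∈ gAux t i := by rw [← hEq]; exact mem_fAux_self t a p
    exact hfacts.1 (erase_subset _ _ hpin)
  rw [card_union_of_disjoint hdisj]
  congr 1
  · rw [Finset.card_image_of_injOn, Nat.card_Icc]
    · omega
    · intro i hi j hj hEq
      simp only [coe_Icc, Set.mem_Icc] at hi hj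
      by_contra hij
      have h1 : (j, 1) ∈ gAux t i := by
        rw [gAux, mem_erase]
        exact ⟨by simp [Ne.symm]; omega, mem_Msig.2 ⟨hj.1, hj.2, rfl⟩⟩
      rw [hEq] at h1
      exact (notMem_erase _ _) h1
  · rw [card_biUnion]
    · have hconst : ∀ a ∈ Finset.Icc (t+1) (t+3),
          ((fiber n k t a).image (fAux t a)).card = (n - (t+3)) * k + 2 * (k - 1) := by
        intro a ha
        rw [mem_Icc] at ha
        rw [Finset.card_image_of_injOn, card_fiber ha.1 ha.2]
        intro p hp q hq hEq
        simp only [mem_coe] at hp hq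
        have hpf := fAux_facts hn ha.1 ha.2 hp
        have hpin : p ∈ fAux t a q := by rw [← hEq]; exact mem_fAux_self t a p
        rcases mem_insert.1 hpin with h | h
        · exact absurd h hpf.2.2.1
        · rcases mem_insert.1 h with h | h
          · exact h
          · exact absurd h hpf.2.1
      rw [Finset.sum_congr rfl hconst, Finset.sum_const, Nat.card_Icc, smul_eq_mul]
      congr 1
      omega
    · intro a ha b hb hab
      rw [Function.onFun, Finset.disjoint_left]
      intro F hFa hFb
      simp only [mem_image] at hFa hFb
      obtain ⟨p, hp, rfl⟩ := hFa
      obtain ⟨q, hq, hEq⟩ := hFb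
      rw [mem_coe, mem_Icc] at ha hb
      have hbin : (b, 1) ∈ fAux t a p := by
        rw [← hEq]; exact mem_insert_self _ _
      have hqf := fAux_facts hn ha.1 ha.2 hp
      rw [mem_fiber hn ha.1 ha.2] at hp
      rcases mem_insert.1 hbin with h | h
      · exact hab (congrArg Prod.fst h).symm
      · rcases mem_insert.1 h with h | h
        · exact hp.2.2.2 ⟨by rw [← h]; omega, by rw [← h]⟩
        · have := mem_Msig.1 h
          omega

end Part5

theorem H1_card_special (n k t : ℕ) (hn : 0 < n) (ht : 0 < t)
    (hk : 2 ≤ k) (hnt : t + 3 ≤ n) :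
    ((H1 n (t + 2) k (t + 3) t).card : ℤ) = 3 * ((n : ℤ) - t - 1) * k + t - 3 := by
  have hk1 : 1 ≤ k := by omega
  rw [card_H1 hk1 hnt]
  have h1 : ((n - (t+3) : ℕ) : ℤ) = (n : ℤ) - (t+3) := by
    rw [Nat.cast_sub hnt]; push_cast; ring
  have h2 : ((k - 1 : ℕ) : ℤ) = (k : ℤ) - 1 := by
    rw [Nat.cast_sub hk1]; push_cast; ring
  push_cast [h1, h2]
  ring
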